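/- arXiv:2510.06501 — 2 statements merged into one kernel-verified Lean document; each statement's English description precedes it below -/
import Mathlib

section
/- Fix β > 1, θ₀ ∈ ℝ^d, m the positive root of m = tanh(βm), and P_{θ₀} = ((1+m)/2)N_d(θ₀,I_d) + ((1−m)/2)N_d(−θ₀,I_d). Then E_{P_{θ₀}}[X tanh(βm + θ₀ᵀX)] = θ₀. -/
open MeasureTheory
open scoped RealInnerProductSpace ENNReal

/-- The multivariate Gaussian measure `N_d(μ, I_d)` on `ℝ^d`. -/
noncomputable def gaussian (d : ℕ) (μ : EuclideanSpace ℝ (Fin d)) :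
    Measure (EuclideanSpace ℝ (Fin d)) :=
  volume.withDensity
    (fun x => ENNReal.ofReal ((2 * Real.pi) ^ (-(d : ℝ) / 2) * Real.exp (-‖x - μ‖ ^ 2 / 2)))

/-- The asymmetric two-component Gaussian mixture
`P_{θ₀} = ((1+m)/2) N_d(θ₀, I_d) + ((1−m)/2) N_d(−θ₀, I_d)`. -/
noncomputable def asymMix (d : ℕ) (θ₀ : EuclideanSpace ℝ (Fin d)) (m : ℝ) :
    Measure (EuclideanSpace ℝ (Fin d)) :=
  ENNReal.ofReal ((1 + m) / 2) • gaussian d θ₀ + ENNReal.ofReal ((1 - m) / 2) • gaussian d (-θ₀)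


section AuxAsymMix

variable {d : ℕ}

private lemma tanh_lt_one' (x : ℝ) : Real.tanh x < 1 := by
  rw [Real.tanh_eq_sinh_div_cosh, div_lt_one (Real.cosh_pos x)]
  nlinarith [Real.cosh_sub_sinh x, Real.exp_pos (-x)]

private lemma key_tanh (a t : ℝ) :
    Real.tanh (a + t) * ((1 + Real.tanh a) * Real.exp t + (1 - Real.tanh a) * Real.exp (-t)) =
      (1 + Real.tanh a) * Real.exp t - (1 - Real.tanh a) * Real.exp (-t) := by
  have h2 : Real.cosh a ≠ 0 := (Real.cosh_pos a).ne'
  have h3 : Real.cosh (a + t) ≠ 0 := (Real.cosh_pos _).ne'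
  have e1 : 1 + Real.tanh a = Real.exp a / Real.cosh a := by
    rw [Real.tanh_eq_sinh_div_cosh, ← Real.cosh_add_sinh]; field_simp
  have e2 : 1 - Real.tanh a = Real.exp (-a) / Real.cosh a := by
    rw [Real.tanh_eq_sinh_div_cosh, ← Real.cosh_sub_sinh]; field_simp
  have hs : Real.exp a / Real.cosh a * Real.exp t + Real.exp (-a) / Real.cosh a * Real.exp (-t)
      = 2 * Real.cosh (a + t) / Real.cosh a := by
    simp only [Real.cosh_eq, Real.exp_add, neg_add]
    field_simp
  have hd : Real.exp a / Real.cosh a * Real.exp t - Real.exp (-a) / Real.cosh a * Real.exp (-t)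
      = 2 * Real.sinh (a + t) / Real.cosh a := by
    simp only [Real.sinh_eq, Real.exp_add, neg_add]
    field_simp
  rw [e1, e2, hs, hd, Real.tanh_eq_sinh_div_cosh]
  field_simp



private lemma int_exp {b : ℝ} (hb : 0 < b) :
    Integrable (fun x : EuclideanSpace ℝ (Fin d) => Real.exp (-b * ‖x‖ ^ 2)) := by
  have h := (GaussianFourier.integrable_cexp_neg_mul_sq_norm_add (V := EuclideanSpace ℝ (Fin d))
    (b := (b : ℂ)) (by simpa using hb) 0 0).norm
  simp only [Complex.norm_exp] at h
  refine h.congr (Filter.Eventually.of_forall fun x => ?_)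
  simp [Complex.add_re, Complex.mul_re, ← Complex.ofReal_pow]

private lemma int_g : Integrable (fun x : EuclideanSpace ℝ (Fin d) => Real.exp (-‖x‖ ^ 2 / 2)) := by
  have h := int_exp (d := d) (b := (1/2 : ℝ)) (by norm_num)
  simpa [neg_div, div_eq_inv_mul, mul_comm] using h

private lemma int_mom : Integrable (fun x : EuclideanSpace ℝ (Fin d) => Real.exp (-‖x‖ ^ 2 / 2) * ‖x‖) := by
  refine (int_exp (d := d) (b := (1/4 : ℝ)) (by norm_num)).mono' ?_ ?_
  · exact (Continuous.mul (by continuity) continuous_norm).aestronglyMeasurable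
  · filter_upwards with x
    have h1 : ‖x‖ ≤ Real.exp (‖x‖ ^ 2 / 4) := by
      have := Real.add_one_le_exp (‖x‖ ^ 2 / 4)
      nlinarith [norm_nonneg x, sq_nonneg (‖x‖ - 2)]
    have h2 : Real.exp (-‖x‖ ^ 2 / 2) * ‖x‖ ≤ Real.exp (-‖x‖^2/2) * Real.exp (‖x‖^2/4) :=
      mul_le_mul_of_nonneg_left h1 (Real.exp_pos _).le
    rw [← Real.exp_add] at h2
    have : -‖x‖ ^ 2 / 2 + ‖x‖ ^ 2 / 4 = -(1/4) * ‖x‖ ^ 2 := by ring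
    rw [this] at h2
    simpa [abs_of_nonneg (mul_nonneg (Real.exp_pos _).le (norm_nonneg x))] using h2

private lemma gauss_total :
    ∫ x : EuclideanSpace ℝ (Fin d), Real.exp (-‖x‖ ^ 2 / 2) = (2 * Real.pi) ^ ((d : ℝ) / 2) := by
  have h := GaussianFourier.integral_rexp_neg_mul_sq_norm (V := EuclideanSpace ℝ (Fin d)) (b := (1/2 : ℝ)) (by norm_num)
  simp only [finrank_euclideanSpace, Fintype.card_fin] at h
  have : ∀ x : EuclideanSpace ℝ (Fin d), Real.exp (-‖x‖ ^ 2 / 2) = Real.exp (-(1/2) * ‖x‖ ^ 2) := by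
    intro x; ring_nf
  rw [funext this, h]
  congr 1
  ring

private lemma gauss_zero : ∫ x : EuclideanSpace ℝ (Fin d), Real.exp (-‖x‖ ^ 2 / 2) • x = 0 := by
  have h := integral_neg_eq_self (fun x : EuclideanSpace ℝ (Fin d) => Real.exp (-‖x‖ ^ 2 / 2) • x) volume
  simp only [norm_neg, smul_neg, integral_neg] at h
  have h2 : (2 : ℝ) • ∫ x : EuclideanSpace ℝ (Fin d), Real.exp (-‖x‖ ^ 2 / 2) • x = 0 := by
    rw [two_smul]
    nth_rewrite 1 [← h]; simp
  rcases smul_eq_zero.mp h2 with h3 | h3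
  · norm_num at h3
  · exact h3

private lemma int_g' (μ : EuclideanSpace ℝ (Fin d)) :
    Integrable (fun x : EuclideanSpace ℝ (Fin d) => Real.exp (-‖x - μ‖ ^ 2 / 2)) := by
  have h := (int_g (d := d)).comp_add_right (-μ)
  simpa [sub_eq_add_neg] using h

private lemma int_mom0 :
    Integrable (fun y : EuclideanSpace ℝ (Fin d) => Real.exp (-‖y‖ ^ 2 / 2) • y) := by
  refine (int_mom (d := d)).mono' ?_ ?_
  · exact ((Continuous.smul (f := fun y : EuclideanSpace ℝ (Fin d) => Real.exp (-‖y‖ ^ 2 / 2)) (by continuity) continuous_id :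
      Continuous fun y : EuclideanSpace ℝ (Fin d) =>
        Real.exp (-‖y‖ ^ 2 / 2) • y)).aestronglyMeasurable
  · filter_upwards with y
    rw [norm_smul, Real.norm_eq_abs, abs_of_nonneg (Real.exp_pos _).le]

private lemma int_mom' (μ : EuclideanSpace ℝ (Fin d)) :
    Integrable (fun x : EuclideanSpace ℝ (Fin d) => Real.exp (-‖x - μ‖ ^ 2 / 2) • x) := by
  have hg : Integrable (fun y : EuclideanSpace ℝ (Fin d) =>
      Real.exp (-‖y‖ ^ 2 / 2) * ‖y‖ + ‖μ‖ * Real.exp (-‖y‖ ^ 2 / 2)) :=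
    int_mom.add (int_g.const_mul ‖μ‖)
  have h := hg.comp_add_right (-μ)
  refine h.mono' ?_ ?_
  · exact ((Continuous.smul (f := fun x : EuclideanSpace ℝ (Fin d) => Real.exp (-‖x - μ‖ ^ 2 / 2)) (by continuity) continuous_id :
      Continuous fun x : EuclideanSpace ℝ (Fin d) =>
        Real.exp (-‖x - μ‖ ^ 2 / 2) • x)).aestronglyMeasurable
  · filter_upwards with x
    rw [norm_smul, Real.norm_eq_abs, abs_of_nonneg (Real.exp_pos _).le]
    have hx : ‖x‖ ≤ ‖x + -μ‖ + ‖μ‖ := by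
      have := norm_add_le (x + -μ) μ
      simpa using this
    have he : x - μ = x + -μ := sub_eq_add_neg x μ
    rw [he]
    have h1 : Real.exp (-‖x + -μ‖ ^ 2 / 2) * ‖x‖
        ≤ Real.exp (-‖x + -μ‖ ^ 2 / 2) * (‖x + -μ‖ + ‖μ‖) :=
      mul_le_mul_of_nonneg_left hx (Real.exp_pos _).le
    calc Real.exp (-‖x + -μ‖ ^ 2 / 2) * ‖x‖
        ≤ Real.exp (-‖x + -μ‖ ^ 2 / 2) * (‖x + -μ‖ + ‖μ‖) := h1
      _ = Real.exp (-‖x + -μ‖ ^ 2 / 2) * ‖x + -μ‖ + ‖μ‖ * Real.exp (-‖x + -μ‖ ^ 2 / 2) := by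
          ring

private lemma gauss_mean (μ : EuclideanSpace ℝ (Fin d)) :
    ∫ x : EuclideanSpace ℝ (Fin d), Real.exp (-‖x - μ‖ ^ 2 / 2) • x
      = (2 * Real.pi) ^ ((d : ℝ) / 2) • μ := by
  have key : (fun x : EuclideanSpace ℝ (Fin d) => Real.exp (-‖x - μ‖ ^ 2 / 2) • x)
      = fun x => (fun y : EuclideanSpace ℝ (Fin d) =>
          Real.exp (-‖y‖ ^ 2 / 2) • (y + μ)) (x + -μ) := by
    funext x; simp [sub_eq_add_neg]
  rw [key, integral_add_right_eq_self (fun y : EuclideanSpace ℝ (Fin d) =>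
    Real.exp (-‖y‖ ^ 2 / 2) • (y + μ)) (-μ)]
  have split : (fun y : EuclideanSpace ℝ (Fin d) => Real.exp (-‖y‖ ^ 2 / 2) • (y + μ))
      = fun y => Real.exp (-‖y‖ ^ 2 / 2) • y + Real.exp (-‖y‖ ^ 2 / 2) • μ := by
    funext y; rw [smul_add]
  rw [split, integral_add int_mom0 (int_g.smul_const μ), gauss_zero, zero_add,
    integral_smul_const, gauss_total]

end AuxAsymMix

/-- with `β > 1`, `m` the positive root of `m = tanh(βm)` and `P_{θ₀}` the
weighted mixture with weights `(1±m)/2`, one has `E_{P_{θ₀}}[X tanh(βm + θ₀ᵀX)] = θ₀`. -/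
theorem asymMix_x_tanh_mean (d : ℕ) (β m : ℝ) (θ₀ : EuclideanSpace ℝ (Fin d))
    (hβ : 1 < β) (hm : 0 < m) (hfix : m = Real.tanh (β * m)) :
    ∫ x, Real.tanh (β * m + ⟪θ₀, x⟫) • x ∂(asymMix d θ₀ m) = θ₀ := by
  have hm1 : m < 1 := by rw [hfix]; exact tanh_lt_one' _
  set a : ℝ := β * m with ha
  set C : ℝ := (2 * Real.pi) ^ (-(d : ℝ) / 2) with hC
  have hCpos : 0 < C := Real.rpow_pos_of_pos (by positivity) _
  have hc1 : (0:ℝ) < (1 + m) / 2 := by linarith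
  have hc2 : (0:ℝ) < (1 - m) / 2 := by linarith
  set h : EuclideanSpace ℝ (Fin d) → ℝ := fun x =>
    (1 + m) / 2 * (C * Real.exp (-‖x - θ₀‖ ^ 2 / 2))
      + (1 - m) / 2 * (C * Real.exp (-‖x - -θ₀‖ ^ 2 / 2)) with hh
  have hnonneg : ∀ x, 0 ≤ h x := fun x => by
    have := Real.exp_pos (-‖x - θ₀‖ ^ 2 / 2)
    have := Real.exp_pos (-‖x - -θ₀‖ ^ 2 / 2)
    positivity
  have hct : ∀ μ : EuclideanSpace ℝ (Fin d),
      Continuous fun x : EuclideanSpace ℝ (Fin d) => Real.exp (-‖x - μ‖ ^ 2 / 2) := by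
    intro μ
    exact (((continuous_id.sub continuous_const).norm.pow 2).neg.div_const 2).rexp
  have hcont : Continuous h :=
    ((continuous_const.mul (continuous_const.mul (hct θ₀))).add
      (continuous_const.mul (continuous_const.mul (hct (-θ₀)))))
  have hmeasfun : ∀ μ : EuclideanSpace ℝ (Fin d), Measurable fun x : EuclideanSpace ℝ (Fin d) =>
      ENNReal.ofReal (C * Real.exp (-‖x - μ‖ ^ 2 / 2)) := by
    intro μ
    exact (ENNReal.measurable_ofReal.comp
      ((continuous_const.mul (hct μ)).measurable))
  have hmeas : asymMix d θ₀ m = volume.withDensity (fun x => ENNReal.ofReal (h x)) := by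
    rw [asymMix, gaussian, gaussian]
    rw [← withDensity_smul' _ _ ENNReal.ofReal_ne_top,
        ← withDensity_smul' _ _ ENNReal.ofReal_ne_top,
        ← withDensity_add_left]
    · congr 1
      funext x
      simp only [Pi.add_apply, Pi.smul_apply, smul_eq_mul, hh, ← hC]
      rw [← ENNReal.ofReal_mul hc1.le, ← ENNReal.ofReal_mul hc2.le, ← ENNReal.ofReal_add]
      · positivity
      · positivity
    · exact (hmeasfun θ₀).const_smul _
  rw [hmeas]
  have hofReal : (fun x : EuclideanSpace ℝ (Fin d) => ENNReal.ofReal (h x))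
      = fun x => (((h x).toNNReal : ℝ≥0∞)) := rfl
  rw [hofReal, integral_withDensity_eq_integral_smul
    (f := fun x => (h x).toNNReal)
    ((continuous_real_toNNReal.comp hcont).measurable) _]
  have hpt : ∀ x : EuclideanSpace ℝ (Fin d),
      (h x).toNNReal • (Real.tanh (a + ⟪θ₀, x⟫) • x)
        = ((1 + m) / 2 * C) • (Real.exp (-‖x - θ₀‖ ^ 2 / 2) • x)
          - ((1 - m) / 2 * C) • (Real.exp (-‖x - -θ₀‖ ^ 2 / 2) • x) := by
    intro x
    set t : ℝ := ⟪θ₀, x⟫ with ht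
    have hρ1 : Real.exp (-‖x - θ₀‖ ^ 2 / 2)
        = Real.exp ((-‖x‖ ^ 2 - ‖θ₀‖ ^ 2) / 2) * Real.exp t := by
      rw [← Real.exp_add]
      congr 1
      rw [norm_sub_sq_real, real_inner_comm]
      ring
    have hρ2 : Real.exp (-‖x - -θ₀‖ ^ 2 / 2)
        = Real.exp ((-‖x‖ ^ 2 - ‖θ₀‖ ^ 2) / 2) * Real.exp (-t) := by
      rw [← Real.exp_add]
      congr 1
      rw [sub_neg_eq_add, norm_add_sq_real, real_inner_comm]
      ring
    rw [NNReal.smul_def, Real.coe_toNNReal _ (hnonneg x), smul_smul, smul_smul, smul_smul,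
      ← sub_smul]
    congr 1
    simp only [hh, hρ1, hρ2]
    have hk := key_tanh a t
    rw [← hfix] at hk
    linear_combination (C * Real.exp ((-‖x‖ ^ 2 - ‖θ₀‖ ^ 2) / 2) / 2) * hk
  calc ∫ x, (h x).toNNReal • (Real.tanh (a + ⟪θ₀, x⟫) • x)
      = ∫ x, (((1 + m) / 2 * C) • (Real.exp (-‖x - θ₀‖ ^ 2 / 2) • x)
          - ((1 - m) / 2 * C) • (Real.exp (-‖x - -θ₀‖ ^ 2 / 2) • x)) := by
        simp only [hpt]
    _ = ((1 + m) / 2 * C) • (∫ x : EuclideanSpace ℝ (Fin d), Real.exp (-‖x - θ₀‖ ^ 2 / 2) • x)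
          - ((1 - m) / 2 * C) • ∫ x : EuclideanSpace ℝ (Fin d),
              Real.exp (-‖x - -θ₀‖ ^ 2 / 2) • x := by
        have i1 : Integrable (fun x : EuclideanSpace ℝ (Fin d) =>
            ((1 + m) / 2 * C) • (Real.exp (-‖x - θ₀‖ ^ 2 / 2) • x)) volume :=
          (int_mom' θ₀).smul ((1 + m) / 2 * C)
        have i2 : Integrable (fun x : EuclideanSpace ℝ (Fin d) =>
            ((1 - m) / 2 * C) • (Real.exp (-‖x - -θ₀‖ ^ 2 / 2) • x)) volume :=
          (int_mom' (-θ₀)).smul ((1 - m) / 2 * C)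
        rw [integral_sub i1 i2, integral_smul, integral_smul]
    _ = θ₀ := by
        rw [gauss_mean θ₀, gauss_mean (-θ₀), smul_smul, smul_smul, smul_neg, sub_neg_eq_add,
          ← add_smul]
        have hCT : C * (2 * Real.pi) ^ ((d : ℝ) / 2) = 1 := by
          rw [hC, ← Real.rpow_add (by positivity),
            show (-(d:ℝ)/2 + (d:ℝ)/2) = 0 by ring, Real.rpow_zero]
        have hone : (1 + m) / 2 * C * (2 * Real.pi) ^ ((d : ℝ) / 2)
            + (1 - m) / 2 * C * (2 * Real.pi) ^ ((d : ℝ) / 2) = 1 := by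
          linear_combination hCT
        rw [hone, one_smul]
end

section
/- Fix β > 1, θ₀ ∈ ℝ^d \ {0}, m the positive root of m = tanh(βm), p = (1+m)/2. Define ν_z := E[X tanh(βm + θ₀ᵀX) | X ~ N_d(zθ₀, I_d)] for z = ±1 and α₁ := E_{P_{θ₀}}[X sech²(βm + θ₀ᵀX)]. Then α₁ = −((1 − m²)/2)(ν₁ − ν₋₁). -/
open MeasureTheory
open scoped RealInnerProductSpace ENNReal NNReal

lemma abs_tanh_le_one (t : ℝ) : |Real.tanh t| ≤ 1 := by
  rw [Real.tanh_eq_sinh_div_cosh, abs_div, abs_of_pos (Real.cosh_pos t),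
    div_le_one (Real.cosh_pos t), abs_le]
  constructor <;> nlinarith [Real.cosh_sub_sinh t, Real.cosh_add_sinh t,
    Real.exp_pos t, Real.exp_pos (-t)]

lemma scalar_key (h u : ℝ) :
    ((1 + Real.tanh h)/2) * ((1 / Real.cosh (h+u))^2 * Real.exp u)
      + ((1 - Real.tanh h)/2) * ((1 / Real.cosh (h+u))^2 * Real.exp (-u))
      + ((1 - Real.tanh h ^ 2)/2) * (Real.tanh (h+u) * Real.exp u)
      - ((1 - Real.tanh h ^ 2)/2) * (Real.tanh (h+u) * Real.exp (-u))
    = (1 - Real.tanh h ^ 2) * Real.cosh u := by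
  have ha := Real.exp_pos h
  have hb := Real.exp_pos u
  have h1 : Real.exp h * Real.exp u + ((Real.exp h)⁻¹ * (Real.exp u)⁻¹) > 0 := by positivity
  have h2 : Real.exp h + (Real.exp h)⁻¹ > 0 := by positivity
  simp only [Real.tanh_eq_sinh_div_cosh, Real.cosh_eq, Real.sinh_eq, neg_add_rev,
    Real.exp_add, Real.exp_neg]
  rw [mul_comm (Real.exp u)⁻¹ (Real.exp h)⁻¹]
  field_simp
  ring

lemma integrable_exp_base (d : ℕ) :
    Integrable (fun x : EuclideanSpace ℝ (Fin d) => Real.exp (-((4:ℝ)⁻¹) * ‖x‖^2)) := by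
  have h := (GaussianFourier.integrable_cexp_neg_mul_sq_norm_add
    (V := EuclideanSpace ℝ (Fin d)) (b := ((4:ℝ)⁻¹ : ℂ)) (by norm_num) 0 0).norm
  simpa [Complex.norm_exp, ← Complex.ofReal_pow] using h

lemma integrable_exp_shift (d : ℕ) (μ : EuclideanSpace ℝ (Fin d)) :
    Integrable (fun x : EuclideanSpace ℝ (Fin d) => Real.exp (-((4:ℝ)⁻¹) * ‖x - μ‖^2)) := by
  simpa using (integrable_exp_base d).comp_sub_right μ

lemma integrable_gauss_smul (d : ℕ) (μ : EuclideanSpace ℝ (Fin d)) (C : ℝ)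
    (c : EuclideanSpace ℝ (Fin d) → ℝ) (hc : Continuous c) (hbd : ∀ x, |c x| ≤ 1) :
    Integrable (fun x : EuclideanSpace ℝ (Fin d) =>
      (C * Real.exp (-‖x - μ‖^2/2)) • (c x • x)) := by
  have hmeas : AEStronglyMeasurable (fun x : EuclideanSpace ℝ (Fin d) =>
      (C * Real.exp (-‖x - μ‖^2/2)) • (c x • x)) volume := by
    apply Continuous.aestronglyMeasurable; fun_prop
  refine (((integrable_exp_shift d μ).const_mul (|C| * (1 + ‖μ‖))).mono' hmeas ?_)
  filter_upwards with x
  have ht : (0:ℝ) ≤ ‖x - μ‖ := norm_nonneg _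
  set t := ‖x - μ‖ with htdef
  have hxt : ‖x‖ ≤ t + ‖μ‖ := by
    calc ‖x‖ = ‖(x - μ) + μ‖ := by rw [sub_add_cancel]
    _ ≤ ‖x - μ‖ + ‖μ‖ := norm_add_le _ _
  have hexp : Real.exp (-(t^2)/2) = Real.exp (-(4:ℝ)⁻¹ * t^2) * Real.exp (-(4:ℝ)⁻¹ * t^2) := by
    rw [← Real.exp_add]; ring_nf
  have hE := Real.exp_pos (-(4:ℝ)⁻¹ * t^2)
  have hkey : t * Real.exp (-(4:ℝ)⁻¹ * t^2) ≤ 1 := by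
    have h1 : t ≤ Real.exp ((4:ℝ)⁻¹ * t^2) := by
      have := Real.add_one_le_exp ((4:ℝ)⁻¹ * t^2)
      nlinarith [sq_nonneg (t/2 - 1)]
    have h2 : Real.exp (-(4:ℝ)⁻¹ * t^2) = (Real.exp ((4:ℝ)⁻¹ * t^2))⁻¹ := by
      rw [← Real.exp_neg]; ring_nf
    rw [h2, mul_inv_le_iff₀ (Real.exp_pos _)]
    simpa using h1
  have hle1 : Real.exp (-(4:ℝ)⁻¹ * t^2) ≤ 1 := by
    apply Real.exp_le_one_iff.mpr; nlinarith
  rw [norm_smul, norm_smul]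
  simp only [Real.norm_eq_abs]
  have hcx := hbd x
  have hcabs : (0:ℝ) ≤ |c x| := abs_nonneg _
  have hEexp : |C * Real.exp (-t^2/2)| = |C| * Real.exp (-t^2/2) := by
    rw [abs_mul, abs_of_pos (Real.exp_pos _)]
  have hnx : (0:ℝ) ≤ ‖x‖ := norm_nonneg _
  calc |C * Real.exp (-t ^ 2 / 2)| * (|c x| * ‖x‖)
      ≤ |C| * Real.exp (-t^2/2) * (1 * ‖x‖) := by
        rw [hEexp]
        gcongr
    _ = |C| * (Real.exp (-(4:ℝ)⁻¹ * t^2) * ‖x‖) * Real.exp (-(4:ℝ)⁻¹ * t^2) := by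
        rw [hexp]; ring
    _ ≤ |C| * (1 + ‖μ‖) * Real.exp (-(4:ℝ)⁻¹ * t^2) := by
        gcongr
        have h4 : Real.exp (-(4:ℝ)⁻¹ * t^2) * ‖x‖ ≤ Real.exp (-(4:ℝ)⁻¹ * t^2) * (t + ‖μ‖) := by
          gcongr
        have h5 : Real.exp (-(4:ℝ)⁻¹ * t^2) * ‖μ‖ ≤ ‖μ‖ :=
          mul_le_of_le_one_left (norm_nonneg μ) hle1
        nlinarith [mul_comm t (Real.exp (-(4:ℝ)⁻¹ * t^2))]

lemma gaussDen_nonneg (d : ℕ) (μ x : EuclideanSpace ℝ (Fin d)) :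
    0 ≤ (2 * Real.pi) ^ (-(d : ℝ) / 2) * Real.exp (-‖x - μ‖ ^ 2 / 2) := by
  have : (0:ℝ) < 2 * Real.pi := by positivity
  positivity

lemma gaussDen_meas (d : ℕ) (μ : EuclideanSpace ℝ (Fin d)) :
    Measurable (fun x : EuclideanSpace ℝ (Fin d) =>
      Real.toNNReal ((2 * Real.pi) ^ (-(d : ℝ) / 2) * Real.exp (-‖x - μ‖ ^ 2 / 2))) := by
  apply Measurable.real_toNNReal
  fun_prop

lemma integral_gaussian_eq (d : ℕ) (μ : EuclideanSpace ℝ (Fin d))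
    (f : EuclideanSpace ℝ (Fin d) → EuclideanSpace ℝ (Fin d)) :
    ∫ x, f x ∂(gaussian d μ)
      = ∫ x, ((2 * Real.pi) ^ (-(d : ℝ) / 2) * Real.exp (-‖x - μ‖ ^ 2 / 2)) • f x := by
  rw [gaussian]
  rw [show (fun x : EuclideanSpace ℝ (Fin d) =>
      ENNReal.ofReal ((2 * Real.pi) ^ (-(d : ℝ) / 2) * Real.exp (-‖x - μ‖ ^ 2 / 2)))
    = (fun x : EuclideanSpace ℝ (Fin d) => ((Real.toNNReal ((2 * Real.pi) ^ (-(d : ℝ) / 2)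
        * Real.exp (-‖x - μ‖ ^ 2 / 2)) : ℝ≥0) : ℝ≥0∞)) from rfl]
  rw [integral_withDensity_eq_integral_smul (gaussDen_meas d μ) f]
  congr 1
  funext x
  rw [NNReal.smul_def, Real.coe_toNNReal _ (gaussDen_nonneg d μ x)]

lemma integrable_gaussian_iff (d : ℕ) (μ : EuclideanSpace ℝ (Fin d))
    (f : EuclideanSpace ℝ (Fin d) → EuclideanSpace ℝ (Fin d)) :
    Integrable f (gaussian d μ) ↔ Integrable
      (fun x => ((2 * Real.pi) ^ (-(d : ℝ) / 2) * Real.exp (-‖x - μ‖ ^ 2 / 2)) • f x) volume := by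
  rw [gaussian]
  rw [show (fun x : EuclideanSpace ℝ (Fin d) =>
      ENNReal.ofReal ((2 * Real.pi) ^ (-(d : ℝ) / 2) * Real.exp (-‖x - μ‖ ^ 2 / 2)))
    = (fun x : EuclideanSpace ℝ (Fin d) => ((Real.toNNReal ((2 * Real.pi) ^ (-(d : ℝ) / 2)
        * Real.exp (-‖x - μ‖ ^ 2 / 2)) : ℝ≥0) : ℝ≥0∞)) from rfl]
  rw [integrable_withDensity_iff_integrable_smul (gaussDen_meas d μ)]
  constructor <;> intro h <;>
  · apply h.congr
    filter_upwards with x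
    rw [NNReal.smul_def, Real.coe_toNNReal _ (gaussDen_nonneg d μ x)]

lemma odd_integral_zero (d : ℕ) (θ₀ : EuclideanSpace ℝ (Fin d)) :
    ∫ x : EuclideanSpace ℝ (Fin d),
      (Real.cosh ⟪θ₀, x⟫ * Real.exp (-‖x‖ ^ 2 / 2)) • x = 0 := by
  set F := fun x : EuclideanSpace ℝ (Fin d) =>
    (Real.cosh ⟪θ₀, x⟫ * Real.exp (-‖x‖ ^ 2 / 2)) • x with hF
  have hneg : ∀ x, F (-x) = -F x := by
    intro x
    simp [hF, inner_neg_right, Real.cosh_neg, norm_neg, smul_neg]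
  have h1 : ∫ x, F (-x) = ∫ x, F x := integral_neg_eq_self F volume
  rw [funext hneg] at h1
  rw [integral_neg] at h1
  have h2 : (2:ℝ) • ∫ x, F x = 0 := by
    rw [two_smul]
    nth_rewrite 1 [← h1]
    simp
  rcases smul_eq_zero.mp h2 with h | h
  · norm_num at h
  · exact h

set_option maxHeartbeats 2000000 in
/-- with `β > 1`, `θ₀ ≠ 0`, `m` the positive root of `m = tanh(βm)`,
`ν_z := E[X tanh(βm + θ₀ᵀX) | X ~ N_d(zθ₀, I_d)]` for `z = ±1`, and
`α₁ := E_{P_{θ₀}}[X sech²(βm + θ₀ᵀX)]`, one has `α₁ = −((1 − m²)/2)(ν₁ − ν₋₁)`. -/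
theorem alpha1_identity (d : ℕ) (β m : ℝ) (θ₀ : EuclideanSpace ℝ (Fin d))
    (hθ : θ₀ ≠ 0) (hβ : 1 < β) (hm : 0 < m) (hfix : m = Real.tanh (β * m)) :
    ∫ x, (1 / Real.cosh (β * m + ⟪θ₀, x⟫)) ^ 2 • x ∂(asymMix d θ₀ m)
      = (-(1 - m ^ 2) / 2) •
        ((∫ x, Real.tanh (β * m + ⟪θ₀, x⟫) • x ∂(gaussian d θ₀))
          - ∫ x, Real.tanh (β * m + ⟪θ₀, x⟫) • x ∂(gaussian d (-θ₀))) := by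
  have hm1 : m < 1 := by
    rw [hfix, Real.tanh_eq_sinh_div_cosh, div_lt_one (Real.cosh_pos _)]
    nlinarith [Real.cosh_sub_sinh (β * m), Real.exp_pos (-(β * m))]
  set Cd : ℝ := (2 * Real.pi) ^ (-(d : ℝ) / 2) with hCd
  set c1 : EuclideanSpace ℝ (Fin d) → ℝ :=
    fun x => (1 / Real.cosh (β * m + ⟪θ₀, x⟫)) ^ 2 with hc1def
  set c2 : EuclideanSpace ℝ (Fin d) → ℝ :=
    fun x => Real.tanh (β * m + ⟪θ₀, x⟫) with hc2def
  have hinner : Continuous fun x : EuclideanSpace ℝ (Fin d) => β * m + ⟪θ₀, x⟫ :=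
    continuous_const.add (Continuous.inner continuous_const continuous_id)
  have hcosh_cont : Continuous fun x : EuclideanSpace ℝ (Fin d) =>
      Real.cosh (β * m + ⟪θ₀, x⟫) := Real.continuous_cosh.comp hinner
  have hcosh_ne : ∀ x : EuclideanSpace ℝ (Fin d),
      Real.cosh (β * m + ⟪θ₀, x⟫) ≠ 0 := fun x => (Real.cosh_pos _).ne'
  have hc1cont : Continuous c1 := by
    apply Continuous.pow
    exact continuous_const.div hcosh_cont hcosh_ne
  have hc2cont : Continuous c2 := by
    rw [hc2def]
    simp only [Real.tanh_eq_sinh_div_cosh]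
    exact Continuous.div (Real.continuous_sinh.comp hinner) hcosh_cont hcosh_ne
  have hc1bd : ∀ x, |c1 x| ≤ 1 := by
    intro x
    rw [hc1def]
    simp only
    rw [abs_of_nonneg (by positivity)]
    have h1 := Real.one_le_cosh (β * m + ⟪θ₀, x⟫)
    rw [div_pow, one_pow]
    rw [div_le_one (by positivity)]
    nlinarith
  have hc2bd : ∀ x, |c2 x| ≤ 1 := fun x => abs_tanh_le_one _
  have H1 := integrable_gauss_smul d θ₀ Cd c1 hc1cont hc1bd
  have H2 := integrable_gauss_smul d (-θ₀) Cd c1 hc1cont hc1bd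
  have H3 := integrable_gauss_smul d θ₀ Cd c2 hc2cont hc2bd
  have H4 := integrable_gauss_smul d (-θ₀) Cd c2 hc2cont hc2bd
  have Ig1 : Integrable (fun x => c1 x • x) (gaussian d θ₀) := by
    rw [integrable_gaussian_iff]
    exact H1
  have Ig2 : Integrable (fun x => c1 x • x) (gaussian d (-θ₀)) := by
    rw [integrable_gaussian_iff]
    exact H2
  have hp : (0:ℝ) ≤ (1 + m) / 2 := by linarith
  have hq : (0:ℝ) ≤ (1 - m) / 2 := by linarith
  -- pointwise identity
  have hpoint : ∀ x : EuclideanSpace ℝ (Fin d),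
      ((1 + m)/2) • ((Cd * Real.exp (-‖x - θ₀‖ ^ 2 / 2)) • (c1 x • x))
        + ((1 - m)/2) • ((Cd * Real.exp (-‖x - -θ₀‖ ^ 2 / 2)) • (c1 x • x))
        + ((1 - m^2)/2) • ((Cd * Real.exp (-‖x - θ₀‖ ^ 2 / 2)) • (c2 x • x))
        - ((1 - m^2)/2) • ((Cd * Real.exp (-‖x - -θ₀‖ ^ 2 / 2)) • (c2 x • x))
      = ((1 - m^2) * Cd * Real.exp (-‖θ₀‖^2/2)) •
          ((Real.cosh ⟪θ₀, x⟫ * Real.exp (-‖x‖ ^ 2 / 2)) • x) := by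
    intro x
    have hplus : Real.exp (-‖x - θ₀‖ ^ 2 / 2)
        = Real.exp (-‖x‖^2/2) * (Real.exp ⟪θ₀, x⟫ * Real.exp (-‖θ₀‖^2/2)) := by
      rw [← Real.exp_add, ← Real.exp_add]
      congr 1
      have hns : ‖x - θ₀‖ ^ 2 = ‖x‖^2 - 2 * ⟪x, θ₀⟫ + ‖θ₀‖^2 := norm_sub_sq_real x θ₀
      rw [hns, real_inner_comm x θ₀]
      ring
    have hminus : Real.exp (-‖x - -θ₀‖ ^ 2 / 2)
        = Real.exp (-‖x‖^2/2) * (Real.exp (-⟪θ₀, x⟫) * Real.exp (-‖θ₀‖^2/2)) := by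
      rw [← Real.exp_add, ← Real.exp_add]
      congr 1
      have hns : ‖x + θ₀‖ ^ 2 = ‖x‖^2 + 2 * ⟪x, θ₀⟫ + ‖θ₀‖^2 := norm_add_sq_real x θ₀
      rw [sub_neg_eq_add, hns, real_inner_comm x θ₀]
      ring
    have sk := scalar_key (β * m) ⟪θ₀, x⟫
    rw [← hfix] at sk
    simp only [smul_smul, hplus, hminus]
    rw [← add_smul, ← add_smul, ← sub_smul]
    congr 1
    rw [hc1def, hc2def]
    simp only
    linear_combination (Cd * Real.exp (-‖x‖^2/2) * Real.exp (-‖θ₀‖^2/2)) * sk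
  -- split the mixture
  rw [asymMix, integral_add_measure
      (Ig1.smul_measure ENNReal.ofReal_ne_top) (Ig2.smul_measure ENNReal.ofReal_ne_top),
    integral_smul_measure, integral_smul_measure,
    ENNReal.toReal_ofReal hp, ENNReal.toReal_ofReal hq,
    integral_gaussian_eq, integral_gaussian_eq, integral_gaussian_eq, integral_gaussian_eq]
  -- the key vanishing combination
  have key : ((1 + m)/2) • (∫ x, (Cd * Real.exp (-‖x - θ₀‖ ^ 2 / 2)) • (c1 x • x))
        + ((1 - m)/2) • (∫ x, (Cd * Real.exp (-‖x - -θ₀‖ ^ 2 / 2)) • (c1 x • x))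
        + ((1 - m^2)/2) • (∫ x, (Cd * Real.exp (-‖x - θ₀‖ ^ 2 / 2)) • (c2 x • x))
        - ((1 - m^2)/2) • (∫ x, (Cd * Real.exp (-‖x - -θ₀‖ ^ 2 / 2)) • (c2 x • x)) = 0 := by
    have H1s : Integrable (fun x : EuclideanSpace ℝ (Fin d) =>
        ((1 + m)/2) • ((Cd * Real.exp (-‖x - θ₀‖ ^ 2 / 2)) • (c1 x • x))) volume := H1.smul ((1 + m)/2)
    have H2s : Integrable (fun x : EuclideanSpace ℝ (Fin d) =>
        ((1 - m)/2) • ((Cd * Real.exp (-‖x - -θ₀‖ ^ 2 / 2)) • (c1 x • x))) volume := H2.smul ((1 - m)/2)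
    have H3s : Integrable (fun x : EuclideanSpace ℝ (Fin d) =>
        ((1 - m^2)/2) • ((Cd * Real.exp (-‖x - θ₀‖ ^ 2 / 2)) • (c2 x • x))) volume := H3.smul ((1 - m^2)/2)
    have H4s : Integrable (fun x : EuclideanSpace ℝ (Fin d) =>
        ((1 - m^2)/2) • ((Cd * Real.exp (-‖x - -θ₀‖ ^ 2 / 2)) • (c2 x • x))) volume := H4.smul ((1 - m^2)/2)
    have key2 : ∫ x : EuclideanSpace ℝ (Fin d),
        (((1 + m)/2) • ((Cd * Real.exp (-‖x - θ₀‖ ^ 2 / 2)) • (c1 x • x))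
          + ((1 - m)/2) • ((Cd * Real.exp (-‖x - -θ₀‖ ^ 2 / 2)) • (c1 x • x))
          + ((1 - m^2)/2) • ((Cd * Real.exp (-‖x - θ₀‖ ^ 2 / 2)) • (c2 x • x))
          - ((1 - m^2)/2) • ((Cd * Real.exp (-‖x - -θ₀‖ ^ 2 / 2)) • (c2 x • x))) = 0 := by
      rw [show (fun x : EuclideanSpace ℝ (Fin d) =>
          ((1 + m)/2) • ((Cd * Real.exp (-‖x - θ₀‖ ^ 2 / 2)) • (c1 x • x))
            + ((1 - m)/2) • ((Cd * Real.exp (-‖x - -θ₀‖ ^ 2 / 2)) • (c1 x • x))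
            + ((1 - m^2)/2) • ((Cd * Real.exp (-‖x - θ₀‖ ^ 2 / 2)) • (c2 x • x))
            - ((1 - m^2)/2) • ((Cd * Real.exp (-‖x - -θ₀‖ ^ 2 / 2)) • (c2 x • x)))
        = fun x => ((1 - m^2) * Cd * Real.exp (-‖θ₀‖^2/2)) •
            ((Real.cosh ⟪θ₀, x⟫ * Real.exp (-‖x‖ ^ 2 / 2)) • x) from funext hpoint]
      rw [integral_smul, odd_integral_zero d θ₀, smul_zero]
    have split : (∫ x : EuclideanSpace ℝ (Fin d),
        (((1 + m)/2) • ((Cd * Real.exp (-‖x - θ₀‖ ^ 2 / 2)) • (c1 x • x))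
          + ((1 - m)/2) • ((Cd * Real.exp (-‖x - -θ₀‖ ^ 2 / 2)) • (c1 x • x))
          + ((1 - m^2)/2) • ((Cd * Real.exp (-‖x - θ₀‖ ^ 2 / 2)) • (c2 x • x))
          - ((1 - m^2)/2) • ((Cd * Real.exp (-‖x - -θ₀‖ ^ 2 / 2)) • (c2 x • x))))
        = (∫ x, ((1 + m)/2) • ((Cd * Real.exp (-‖x - θ₀‖ ^ 2 / 2)) • (c1 x • x)))
          + (∫ x, ((1 - m)/2) • ((Cd * Real.exp (-‖x - -θ₀‖ ^ 2 / 2)) • (c1 x • x)))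
          + (∫ x, ((1 - m^2)/2) • ((Cd * Real.exp (-‖x - θ₀‖ ^ 2 / 2)) • (c2 x • x)))
          - (∫ x, ((1 - m^2)/2) • ((Cd * Real.exp (-‖x - -θ₀‖ ^ 2 / 2)) • (c2 x • x))) := by
      rw [integral_sub, integral_add, integral_add] <;>
        first
          | exact H1s
          | exact H2s
          | exact H3s
          | exact H4s
          | exact H1s.add H2s
          | exact (H1s.add H2s).add H3s
    rw [split] at key2
    rw [integral_smul, integral_smul, integral_smul, integral_smul] at key2
    exact key2
  linear_combination (norm := module) key
end
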